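/- For every τ ∈ ℂ with Im τ > 0, the derivative of the Jacobi theta series in z at z = 0 satisfies (2πi)^{−1} · ∂ϑ/∂z(τ, 0) = η(τ)³, where η(τ) = exp(πiτ/12) ∏_{n≥1} (1 − exp(2πinτ)) is the Dedekind eta function; that is, ∂ϑ/∂z(τ,0) = 2πi · exp(πiτ/4) · ∏_{n≥1} (1 − exp(2πinτ))³. -/

import Mathlib

open Complex

/-- The Jacobi theta series
`ϑ(τ,z) = Σ_{n∈ℤ} (−1)^n exp(πi(2n+1)²τ/4 + πi(2n+1)z)`. -/
noncomputable def thetaJ (τ z : ℂ) : ℂ :=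
  ∑' n : ℤ, (-1 : ℂ) ^ n *
    Complex.exp (Real.pi * Complex.I * ((2 * n + 1) ^ 2 * τ / 4 + (2 * n + 1) * z))


noncomputable def jhp (Q : ℂ) (m : ℕ) : ℂ := ∏ i ∈ Finset.range m, (1 - Q ^ (i + 1))

noncomputable def jG (Q : ℂ) (m : ℤ) : ℂ := if 0 ≤ m then (jhp Q m.toNat)⁻¹ else 0

noncomputable def jB (Q : ℂ) (N : ℕ) (k : ℤ) : ℂ :=
  jhp Q (2 * N) * jG Q (N + k) * jG Q (N - k)

def jT (k : ℤ) : ℤ := k * (k + 1) / 2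

lemma jT_two_mul (k : ℤ) : 2 * jT k = k * (k + 1) := by
  have h := Int.even_mul_succ_self k
  obtain ⟨c, hc⟩ := h
  simp only [jT, hc, ← two_mul]
  omega

lemma jT_nonneg (k : ℤ) : 0 ≤ jT k := by
  have := jT_two_mul k
  nlinarith [mul_self_nonneg (2*k+1)]

lemma jT_sub_one (k : ℤ) : jT (k - 1) = jT k - k := by
  have h1 := jT_two_mul (k-1); have h2 := jT_two_mul k
  have : 2 * jT (k - 1) = 2 * (jT k - k) := by rw [h1]; linear_combination -h2
  omega

lemma jT_add_one (k : ℤ) : jT (k + 1) = jT k + k + 1 := by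
  have h1 := jT_two_mul (k+1); have h2 := jT_two_mul k
  have : 2 * jT (k + 1) = 2 * (jT k + k + 1) := by rw [h1]; linear_combination -h2
  omega

lemma jT_neg (n : ℤ) : jT (-(n+1)) = jT n := by
  have h1 := jT_two_mul (-(n+1)); have h2 := jT_two_mul n
  have : 2 * jT (-(n+1)) = 2 * jT n := by rw [h1]; linear_combination -h2
  omega

lemma jhp_succ (Q : ℂ) (m : ℕ) : jhp Q (m + 1) = jhp Q m * (1 - Q ^ (m + 1)) :=
  Finset.prod_range_succ _ _

lemma one_sub_pow_ne {Q : ℂ} (hQ : ‖Q‖ < 1) (m : ℕ) : (1 : ℂ) - Q ^ (m + 1) ≠ 0 := by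
  intro h
  have : ‖Q ^ (m+1)‖ < 1 := by
    rw [norm_pow]
    calc ‖Q‖ ^ (m+1) ≤ ‖Q‖ ^ 1 := by
          apply pow_le_pow_of_le_one (norm_nonneg _) hQ.le; omega
      _ < 1 := by simpa using hQ
  rw [sub_eq_zero] at h
  rw [← h] at this; simp at this

lemma jhp_ne_zero {Q : ℂ} (hQ : ‖Q‖ < 1) (m : ℕ) : jhp Q m ≠ 0 :=
  Finset.prod_ne_zero_iff.2 fun i _ => one_sub_pow_ne hQ i

lemma jG_step {Q : ℂ} (hQ : ‖Q‖ < 1) (m : ℤ) :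
    jG Q (m - 1) = (1 - Q ^ m) * jG Q m := by
  rcases lt_trichotomy m 0 with h | h | h
  · rw [jG, jG, if_neg (by omega), if_neg (by omega), mul_zero]
  · subst h; simp [jG, jhp]
  · obtain ⟨n, hn⟩ : ∃ n : ℕ, m = (n : ℤ) + 1 := ⟨(m-1).toNat, by omega⟩
    subst hn
    rw [jG, jG, if_pos (by omega), if_pos (by omega)]
    have h1 : ((n : ℤ) + 1 - 1).toNat = n := by omega
    have h2 : ((n : ℤ) + 1).toNat = n + 1 := by omega
    have h3 : Q ^ ((n : ℤ) + 1) = Q ^ (n + 1) := by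
      rw [← zpow_natCast]; norm_cast
    rw [h1, h2, h3, jhp_succ, mul_inv]
    field_simp [one_sub_pow_ne hQ n, jhp_ne_zero hQ]

lemma jG_neg {Q : ℂ} {m : ℤ} (h : m < 0) : jG Q m = 0 := by
  rw [jG, if_neg (by omega)]

lemma jB_eq_zero {Q : ℂ} {N : ℕ} {k : ℤ} (h : (N : ℤ) < |k|) : jB Q N k = 0 := by
  rcases abs_cases k with ⟨h1, _⟩ | ⟨h1, _⟩
  · rw [jB, jG_neg (show (N:ℤ) - k < 0 by omega), mul_zero]
  · rw [jB, mul_assoc, jG_neg (show (N:ℤ) + k < 0 by omega)]; simp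
lemma jB_rec {Q : ℂ} (hQ0 : Q ≠ 0) (hQ : ‖Q‖ < 1) (N : ℕ) (k : ℤ) :
    jB Q (N + 1) k = (1 + Q ^ (2 * N + 1)) * jB Q N k
      + Q ^ ((N : ℤ) + 1 - k) * jB Q N (k - 1)
      + Q ^ ((N : ℤ) + 1 + k) * jB Q N (k + 1) := by
  set a : ℤ := (N : ℤ) + 1 + k with hadef
  set b : ℤ := (N : ℤ) + 1 - k with hbdef
  have ha : (N : ℤ) + k = a - 1 := by rw [hadef]; ring
  have hb : (N : ℤ) - k = b - 1 := by rw [hbdef]; ring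
  have ha2 : (N : ℤ) + (k - 1) = a - 1 - 1 := by rw [hadef]; ring
  have hb2 : (N : ℤ) - (k - 1) = b := by rw [hbdef]; ring
  have ha3 : (N : ℤ) + (k + 1) = a := by rw [hadef]; ring
  have hb3 : (N : ℤ) - (k + 1) = b - 1 - 1 := by rw [hbdef]; ring
  have hup : (↑(N + 1) : ℤ) + k = a := by rw [hadef]; push_cast; ring
  have hun : (↑(N + 1) : ℤ) - k = b := by rw [hbdef]; push_cast; ring
  have gA1 : jG Q (a - 1) = (1 - Q ^ a) * jG Q a := jG_step hQ a
  have gB1 : jG Q (b - 1) = (1 - Q ^ b) * jG Q b := jG_step hQ b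
  have gA2 : jG Q (a - 1 - 1) = (1 - Q ^ (a - 1)) * ((1 - Q ^ a) * jG Q a) := by
    rw [jG_step hQ (a - 1), gA1]
  have gB2 : jG Q (b - 1 - 1) = (1 - Q ^ (b - 1)) * ((1 - Q ^ b) * jG Q b) := by
    rw [jG_step hQ (b - 1), gB1]
  have hp2 : jhp Q (2 * (N + 1)) = jhp Q (2 * N) * (1 - Q ^ (2 * N + 1)) * (1 - Q ^ (2 * N + 2)) := by
    have h : 2 * (N + 1) = (2 * N + 1) + 1 := by ring
    rw [h, jhp_succ, jhp_succ]
  have hsa : Q ^ a = Q ^ N * Q * Q ^ k := by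
    rw [hadef, zpow_add₀ hQ0, zpow_add₀ hQ0, zpow_natCast, zpow_one]
  have hsa1 : Q ^ (a - 1) = Q ^ N * Q ^ k := by
    have h : a - 1 = (N : ℤ) + k := by rw [hadef]; ring
    rw [h, zpow_add₀ hQ0, zpow_natCast]
  have hsb : Q ^ b = Q ^ N * Q * (Q ^ k)⁻¹ := by
    have h : b = ((N : ℤ) + 1) + (-k) := by rw [hbdef]; ring
    rw [h, zpow_add₀ hQ0, zpow_add₀ hQ0, zpow_natCast, zpow_one, zpow_neg]
  have hsb1 : Q ^ (b - 1) = Q ^ N * (Q ^ k)⁻¹ := by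
    have h : b - 1 = (N : ℤ) + (-k) := by rw [hbdef]; ring
    rw [h, zpow_add₀ hQ0, zpow_natCast, zpow_neg]
  have hn1 : Q ^ (2 * N + 1) = Q ^ N * Q ^ N * Q := by rw [pow_succ, two_mul, pow_add]
  have hn2 : Q ^ (2 * N + 2) = Q ^ N * Q ^ N * Q * Q := by
    have h : 2 * N + 2 = (2 * N + 1) + 1 := by ring
    rw [h, pow_succ, hn1]
  have htk : (Q : ℂ) ^ k ≠ 0 := zpow_ne_zero _ hQ0
  rw [jB, jB, jB, jB, hup, hun, ha, hb, ha2, hb2, ha3, hb3, gA1, gB1, gA2, gB2, hp2,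
    hsa, hsa1, hsb, hsb1, hn1, hn2]
  field_simp
  ring
lemma jB_supp_summable {N : ℕ} {f : ℤ → ℂ} (h : ∀ k : ℤ, (N : ℤ) < |k| → f k = 0) :
    Summable f := by
  apply summable_of_ne_finset_zero (s := Finset.Icc (-(N : ℤ)) N)
  intro k hk
  rw [Finset.mem_Icc] at hk
  exact h k (by rcases abs_cases k with ⟨h1, _⟩ | ⟨h1, _⟩ <;> omega)

lemma jFIN {Q y : ℂ} (hQ0 : Q ≠ 0) (hQ : ‖Q‖ < 1) (hy : y ≠ 0) (N : ℕ) :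
    ∏ j ∈ Finset.range N, ((1 + y * Q ^ (j + 1)) * (1 + y⁻¹ * Q ^ j)) =
      ∑' k : ℤ, jB Q N k * Q ^ jT k * y ^ k := by
  have htk : ∀ k : ℤ, (Q : ℂ) ^ k ≠ 0 := fun k => zpow_ne_zero _ hQ0
  induction N with
  | zero =>
      rw [Finset.range_zero, Finset.prod_empty]
      rw [tsum_eq_single 0 (fun k hk => by
        rw [jB_eq_zero (by simpa using abs_pos.2 hk), zero_mul, zero_mul])]
      simp [jB, jG, jhp, jT]
  | succ N ih =>
      set c : ℤ → ℂ := fun k => jB Q N k * Q ^ jT k * y ^ k with hc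
      have S0 : Summable c := by
        apply jB_supp_summable (N := N); intro k hk
        rw [hc]; simp only; rw [jB_eq_zero hk, zero_mul, zero_mul]
      set F : ℤ → ℂ := fun k => Q ^ ((N : ℤ) + 1 - k) * jB Q N (k - 1) * Q ^ jT k * y ^ k with hF
      set F' : ℤ → ℂ := fun k => Q ^ ((N : ℤ) + 1 + k) * jB Q N (k + 1) * Q ^ jT k * y ^ k with hF'
      have e1 : ∀ k : ℤ, F (k + 1) = c k * (y * Q ^ (N + 1)) := by
        intro k
        rw [hF, hc]; simp only
        rw [add_sub_cancel_right, jT_add_one, zpow_add_one₀ hy]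
        rw [show (N : ℤ) + 1 - (k + 1) = (N : ℤ) + -k by ring,
          zpow_add₀ hQ0, zpow_natCast, zpow_neg]
        rw [show jT k + k + 1 = jT k + (k + 1) by ring, zpow_add₀ hQ0, zpow_add_one₀ hQ0]
        rw [pow_succ]
        field_simp [htk k]
      have e2 : ∀ k : ℤ, F' (k - 1) = c k * (y⁻¹ * Q ^ N) := by
        intro k
        rw [hF', hc]; simp only
        rw [sub_add_cancel, jT_sub_one, zpow_sub_one₀ hy]
        rw [show (N : ℤ) + 1 + (k - 1) = (N : ℤ) + k by ring,
          zpow_add₀ hQ0, zpow_natCast]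
        rw [show jT k - k = jT k + -k by ring, zpow_add₀ hQ0, zpow_neg]
        field_simp [htk k]
      have SF : Summable F := by
        apply jB_supp_summable (N := N + 1); intro k hk
        rw [hF]; simp only
        rw [jB_eq_zero (show (N : ℤ) < |k - 1| by
          rcases abs_cases k with ⟨h1, _⟩ | ⟨h1, _⟩ <;>
            rcases abs_cases (k - 1) with ⟨h2, _⟩ | ⟨h2, _⟩ <;> push_cast at hk ⊢ <;> omega)]
        ring
      have SF' : Summable F' := by
        apply jB_supp_summable (N := N + 1); intro k hk
        rw [hF']; simp only
        rw [jB_eq_zero (show (N : ℤ) < |k + 1| by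
          rcases abs_cases k with ⟨h1, _⟩ | ⟨h1, _⟩ <;>
            rcases abs_cases (k + 1) with ⟨h2, _⟩ | ⟨h2, _⟩ <;> push_cast at hk ⊢ <;> omega)]
        ring
      calc ∏ j ∈ Finset.range (N + 1), ((1 + y * Q ^ (j + 1)) * (1 + y⁻¹ * Q ^ j))
          = (∑' k, c k) * ((1 + y * Q ^ (N + 1)) * (1 + y⁻¹ * Q ^ N)) := by
            rw [Finset.prod_range_succ, ih]
        _ = ∑' k, c k * ((1 + y * Q ^ (N + 1)) * (1 + y⁻¹ * Q ^ N)) := tsum_mul_right.symm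
        _ = ∑' k, ((1 + Q ^ (2 * N + 1)) * c k + (c k * (y * Q ^ (N + 1)) + c k * (y⁻¹ * Q ^ N))) := by
            apply tsum_congr; intro k
            have hQQ : (Q : ℂ) ^ (N + 1) * Q ^ N = Q ^ (2 * N + 1) := by
              rw [← pow_add]; congr 1; ring
            rw [← hQQ]
            field_simp
            ring
        _ = ∑' k, ((1 + Q ^ (2 * N + 1)) * c k) + (∑' k, c k * (y * Q ^ (N + 1)) + ∑' k, c k * (y⁻¹ * Q ^ N)) := by
            rw [Summable.tsum_add (S0.mul_left _) ((S0.mul_right _).add (S0.mul_right _)),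
              Summable.tsum_add (S0.mul_right _) (S0.mul_right _)]
        _ = ∑' k, ((1 + Q ^ (2 * N + 1)) * c k) + (∑' k, F k + ∑' k, F' k) := by
            congr 1
            congr 1
            · rw [← (Equiv.addRight (1 : ℤ)).tsum_eq F]
              exact tsum_congr fun k => (e1 k).symm
            · rw [← (Equiv.subRight (1 : ℤ)).tsum_eq F']
              exact tsum_congr fun k => (e2 k).symm
        _ = ∑' k, ((1 + Q ^ (2 * N + 1)) * c k + (F k + F' k)) := by
            rw [Summable.tsum_add (S0.mul_left _) (SF.add SF'), Summable.tsum_add SF SF']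
        _ = ∑' k, jB Q (N + 1) k * Q ^ jT k * y ^ k := by
            apply tsum_congr; intro k
            rw [hc, hF, hF']; simp only
            rw [jB_rec hQ0 hQ N k]
            ring
lemma neg_one_ne_zero' : (-1 : ℂ) ≠ 0 := by norm_num

lemma jFINDERIV {Q : ℂ} (hQ0 : Q ≠ 0) (hQ : ‖Q‖ < 1) (N : ℕ) :
    ∑' k : ℤ, (-1 : ℂ) ^ k * (k : ℂ) * jB Q (N + 1) k * Q ^ jT k =
      jhp Q (N + 1) * jhp Q N := by
  classical
  set s : Finset ℤ := Finset.Icc (-(N + 1 : ℤ)) (N + 1) with hs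
  have hmem : ∀ k : ℤ, k ∉ s → ((N : ℤ) + 1 < |k|) := by
    intro k hk
    rw [hs, Finset.mem_Icc] at hk
    rcases abs_cases k with ⟨h1, _⟩ | ⟨h1, _⟩ <;> omega
  have hBz : ∀ k : ℤ, k ∉ s → jB Q (N + 1) k = 0 := fun k hk =>
    jB_eq_zero (by push_cast; exact hmem k hk)
  set L : ℂ → ℂ := fun y => ∏ j ∈ Finset.range (N + 1),
    ((1 + y * Q ^ (j + 1)) * (1 + y⁻¹ * Q ^ j)) with hL
  set R : ℂ → ℂ := fun y => ∑ k ∈ s, jB Q (N + 1) k * Q ^ jT k * y ^ k with hR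
  have hLR : ∀ y : ℂ, y ≠ 0 → L y = R y := by
    intro y hy
    rw [hL, hR]; simp only
    rw [jFIN hQ0 hQ hy (N + 1)]
    exact tsum_eq_sum (fun k hk => by rw [hBz k hk, zero_mul, zero_mul])
  have hEv : L =ᶠ[nhds (-1 : ℂ)] R :=
    Filter.eventually_of_mem (compl_singleton_mem_nhds (by norm_num : (-1 : ℂ) ≠ 0))
      (fun y hy => hLR y hy)
  -- derivative of R at -1
  have hRd : HasDerivAt R (∑ k ∈ s, jB Q (N + 1) k * Q ^ jT k * ((k : ℂ) * (-1) ^ (k - 1)))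
      (-1 : ℂ) := by
    apply HasDerivAt.fun_sum
    intro k _
    exact (hasDerivAt_zpow k (-1 : ℂ) (Or.inl neg_one_ne_zero')).const_mul _
  -- derivative of L at -1
  set g : ℂ → ℂ := fun y => ∏ j ∈ Finset.range N,
    ((1 + y * Q ^ (j + 1 + 1)) * (1 + y⁻¹ * Q ^ (j + 1))) with hg
  have hLsplit : L = fun y => g y * ((1 + y * Q ^ (0 + 1)) * (1 + y⁻¹ * Q ^ (0 : ℕ))) := by
    funext y
    rw [hL, hg]; simp only
    exact Finset.prod_range_succ' (fun j => (1 + y * Q ^ (j + 1)) * (1 + y⁻¹ * Q ^ j)) N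
  have hinv : HasDerivAt (fun y : ℂ => y⁻¹) (-((-1 : ℂ) ^ 2)⁻¹) (-1) :=
    hasDerivAt_inv neg_one_ne_zero'
  have hgd : DifferentiableAt ℂ g (-1) := by
    rw [hg]
    apply DifferentiableAt.fun_finsetProd
    intro j _
    apply DifferentiableAt.mul
    · exact (differentiableAt_id.mul_const _).const_add _
    · exact ((differentiableAt_inv neg_one_ne_zero').mul_const _).const_add _
  have hf0 : HasDerivAt (fun y : ℂ => (1 + y * Q ^ (0 + 1)) * (1 + y⁻¹ * Q ^ (0 : ℕ)))
      ((1 * Q ^ (0 + 1)) * (1 + (-1 : ℂ)⁻¹ * Q ^ (0 : ℕ))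
        + (1 + (-1 : ℂ) * Q ^ (0 + 1)) * (-((-1 : ℂ) ^ 2)⁻¹ * Q ^ (0 : ℕ))) (-1) := by
    exact (((hasDerivAt_id (-1 : ℂ)).mul_const _).const_add 1).mul
      ((hinv.mul_const _).const_add 1)
  have hLd : HasDerivAt L (deriv g (-1) * ((1 + (-1 : ℂ) * Q ^ (0 + 1)) * (1 + (-1 : ℂ)⁻¹ * Q ^ (0 : ℕ)))
      + g (-1) * ((1 * Q ^ (0 + 1)) * (1 + (-1 : ℂ)⁻¹ * Q ^ (0 : ℕ))
        + (1 + (-1 : ℂ) * Q ^ (0 + 1)) * (-((-1 : ℂ) ^ 2)⁻¹ * Q ^ (0 : ℕ)))) (-1) := by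
    rw [hLsplit]
    exact (hgd.hasDerivAt).mul hf0
  have hderiv_eq : deriv L (-1) = deriv R (-1) := hEv.deriv_eq
  rw [hLd.deriv, hRd.deriv] at hderiv_eq
  -- simplify the L side
  have hzero : (1 + (-1 : ℂ)⁻¹ * Q ^ (0 : ℕ)) = 0 := by norm_num
  rw [hzero] at hderiv_eq
  have hgval : g (-1) * (1 - Q) = jhp Q (N + 1) * jhp Q N := by
    rw [hg]; simp only
    have : ∀ j ∈ Finset.range N,
        (1 + (-1 : ℂ) * Q ^ (j + 1 + 1)) * (1 + (-1 : ℂ)⁻¹ * Q ^ (j + 1))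
          = (1 - Q ^ (j + 1 + 1)) * (1 - Q ^ (j + 1)) := by
      intro j _; norm_num; ring
    rw [Finset.prod_congr rfl this, Finset.prod_mul_distrib]
    have h1 : jhp Q (N + 1) = (∏ j ∈ Finset.range N, (1 - Q ^ (j + 1 + 1))) * (1 - Q ^ (0 + 1)) :=
      Finset.prod_range_succ' (fun j => (1 - Q ^ (j + 1))) N
    rw [h1, jhp]
    ring
  -- now hderiv_eq : g(-1) * (Q - 1) = sum
  have hQ1 : (1 : ℂ) - Q ≠ 0 := by
    have := one_sub_pow_ne hQ 0; rwa [pow_one] at this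
  have hsum : ∑ k ∈ s, jB Q (N + 1) k * Q ^ jT k * ((k : ℂ) * (-1) ^ (k - 1))
      = -(jhp Q (N + 1) * jhp Q N) := by
    rw [← hderiv_eq, ← hgval]
    norm_num
    ring
  have hfin : ∑ k ∈ s, (-1 : ℂ) ^ k * (k : ℂ) * jB Q (N + 1) k * Q ^ jT k
      = jhp Q (N + 1) * jhp Q N := by
    have hterm : ∀ k ∈ s, jB Q (N + 1) k * Q ^ jT k * ((k : ℂ) * (-1) ^ (k - 1))
        = -((-1 : ℂ) ^ k * (k : ℂ) * jB Q (N + 1) k * Q ^ jT k) := by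
      intro k _
      rw [zpow_sub_one₀ neg_one_ne_zero']
      norm_num
      ring
    rw [Finset.sum_congr rfl hterm, Finset.sum_neg_distrib] at hsum
    exact neg_inj.mp hsum
  have htot := tsum_eq_sum (L := SummationFilter.unconditional ℤ) (f := fun k : ℤ => (-1 : ℂ) ^ k * (k : ℂ) * jB Q (N + 1) k * Q ^ jT k)
    (s := s) (fun k hk => by rw [hBz k hk]; ring)
  rw [htot]
  exact hfin
section limits
open Filter Topology

variable {Q : ℂ}

lemma geom_partial_le {r : ℝ} (h0 : 0 ≤ r) (h1 : r < 1) (m : ℕ) :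
    ∑ i ∈ Finset.range m, r ^ (i + 1) ≤ r / (1 - r) := by
  have hsum : Summable (fun i : ℕ => r ^ (i + 1)) := by
    apply Summable.congr ((summable_geometric_of_lt_one h0 h1).mul_right r)
    intro i; rw [pow_succ]
  have := Summable.sum_le_tsum (Finset.range m) (fun i _ => by positivity) hsum
  refine this.trans ?_
  have : ∑' i : ℕ, r ^ (i + 1) = (1 - r)⁻¹ * r := by
    rw [tsum_congr (fun i : ℕ => pow_succ r i), tsum_mul_right, tsum_geometric_of_lt_one h0 h1]
  rw [this, div_eq_mul_inv, mul_comm]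

lemma jhp_norm_le (hQ : ‖Q‖ < 1) (m : ℕ) : ‖jhp Q m‖ ≤ Real.exp (‖Q‖ / (1 - ‖Q‖)) := by
  set r := ‖Q‖ with hr
  have h0 : 0 ≤ r := norm_nonneg _
  rw [jhp, norm_prod]
  calc ∏ i ∈ Finset.range m, ‖(1 : ℂ) - Q ^ (i + 1)‖
      ≤ ∏ i ∈ Finset.range m, Real.exp (r ^ (i + 1)) := by
        apply Finset.prod_le_prod (fun i _ => norm_nonneg _)
        intro i _
        calc ‖(1 : ℂ) - Q ^ (i + 1)‖ ≤ ‖(1 : ℂ)‖ + ‖Q ^ (i + 1)‖ := norm_sub_le _ _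
          _ = 1 + r ^ (i + 1) := by rw [norm_one, norm_pow]
          _ ≤ Real.exp (r ^ (i + 1)) := by
              have := Real.add_one_le_exp (r ^ (i + 1)); linarith
    _ = Real.exp (∑ i ∈ Finset.range m, r ^ (i + 1)) := (Real.exp_sum _ _).symm
    _ ≤ Real.exp (r / (1 - r)) := Real.exp_le_exp.2 (geom_partial_le h0 hQ m)

lemma neg_log_one_sub_le {x r : ℝ} (hx0 : 0 ≤ x) (hxr : x ≤ r) (hr : r < 1) :
    -Real.log (1 - x) ≤ x / (1 - r) := by
  have hx1 : x < 1 := lt_of_le_of_lt hxr hr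
  have hpos : 0 < 1 - x := by linarith
  have h := Real.log_le_sub_one_of_pos (inv_pos.2 hpos)
  rw [Real.log_inv] at h
  have : (1 - x)⁻¹ - 1 = x / (1 - x) := by field_simp; ring
  rw [this] at h
  refine (by linarith : -Real.log (1 - x) ≤ x / (1 - x)).trans ?_
  apply div_le_div_of_nonneg_left hx0 (by linarith) (by linarith)

lemma jhp_norm_ge (hQ : ‖Q‖ < 1) (m : ℕ) : Real.exp (-(‖Q‖ / (1 - ‖Q‖) ^ 2)) ≤ ‖jhp Q m‖ := by
  set r := ‖Q‖ with hr
  have h0 : 0 ≤ r := norm_nonneg _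
  have hxr : ∀ i : ℕ, r ^ (i + 1) ≤ r := fun i =>
    pow_le_of_le_one h0 hQ.le (by omega)
  have hx0 : ∀ i : ℕ, (0:ℝ) ≤ r ^ (i + 1) := fun i => by positivity
  have hx1 : ∀ i : ℕ, r ^ (i + 1) < 1 := fun i => lt_of_le_of_lt (hxr i) hQ
  rw [jhp, norm_prod]
  have step1 : ∏ i ∈ Finset.range m, (1 - r ^ (i + 1))
      ≤ ∏ i ∈ Finset.range m, ‖(1 : ℂ) - Q ^ (i + 1)‖ := by
    apply Finset.prod_le_prod (fun i _ => by have := hx1 i; linarith)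
    intro i _
    calc 1 - r ^ (i + 1) = ‖(1:ℂ)‖ - ‖Q ^ (i+1)‖ := by rw [norm_one, norm_pow]
      _ ≤ ‖(1 : ℂ) - Q ^ (i + 1)‖ := norm_sub_norm_le _ _
  refine le_trans ?_ step1
  have heq : ∏ i ∈ Finset.range m, (1 - r ^ (i + 1))
      = Real.exp (∑ i ∈ Finset.range m, Real.log (1 - r ^ (i + 1))) := by
    rw [Real.exp_sum]
    apply Finset.prod_congr rfl
    intro i _
    rw [Real.exp_log (by have := hx1 i; linarith)]
  rw [heq, Real.exp_le_exp]
  have hterm : ∀ i ∈ Finset.range m, -(r ^ (i+1) / (1 - r)) ≤ Real.log (1 - r ^ (i + 1)) := by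
    intro i _
    have := neg_log_one_sub_le (hx0 i) (hxr i) hQ
    linarith
  calc -(r / (1 - r) ^ 2) ≤ -((r / (1-r)) / (1 - r)) := by
        rw [div_div, ← pow_two]
    _ ≤ ∑ i ∈ Finset.range m, -(r ^ (i+1) / (1 - r)) := by
        rw [Finset.sum_neg_distrib]
        apply neg_le_neg
        rw [← Finset.sum_div]
        exact (div_le_div_iff_of_pos_right (by linarith)).2 (geom_partial_le h0 hQ m)
    _ ≤ ∑ i ∈ Finset.range m, Real.log (1 - r ^ (i + 1)) :=
        Finset.sum_le_sum hterm

end limits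
section limits2
open Filter Topology

variable {Q : ℂ}

lemma jlog_summable (hQ : ‖Q‖ < 1) :
    Summable (fun n : ℕ => Complex.log (1 - Q ^ (n + 1))) := by
  set r := ‖Q‖ with hr
  have h0 : 0 ≤ r := norm_nonneg _
  have hxr : ∀ n : ℕ, ‖Q ^ (n+1)‖ ≤ r := fun n => by
    rw [norm_pow]; exact pow_le_of_le_one h0 hQ.le (by omega)
  have hx1 : ∀ n : ℕ, ‖Q ^ (n+1)‖ < 1 := fun n => lt_of_le_of_lt (hxr n) hQ
  refine Summable.of_norm_bounded (g := fun n : ℕ => (r / (2 * (1 - r)) + 1) * r ^ (n + 1)) ?_ ?_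
  · apply Summable.mul_left
    apply Summable.congr ((summable_geometric_of_lt_one h0 hQ).mul_right r)
    intro i; rw [pow_succ]
  · intro n
    have hz := Complex.norm_log_one_add_le (z := -(Q ^ (n+1))) (by rw [norm_neg]; exact hx1 n)
    rw [show (1 : ℂ) + -(Q ^ (n+1)) = 1 - Q ^ (n+1) by ring] at hz
    rw [norm_neg, norm_pow] at hz
    refine hz.trans ?_
    have hle : r ^ (n+1) ≤ r := by
      have := hxr n; rwa [norm_pow] at this
    have hpos : 0 < 1 - r := by linarith
    have hposn : 0 < 1 - r ^ (n+1) := by nlinarith [hx1 n, norm_pow Q (n+1)]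
    have h1 : (r ^ (n+1)) ^ 2 * (1 - r ^ (n+1))⁻¹ / 2 ≤ r / (2 * (1 - r)) * r ^ (n+1) := by
      rw [pow_two]
      rw [div_le_iff₀ (by norm_num : (0:ℝ) < 2)] at *
      have hinv : (1 - r ^ (n+1))⁻¹ ≤ (1 - r)⁻¹ := by
        apply inv_anti₀ hpos; linarith
      calc r ^ (n+1) * r ^ (n+1) * (1 - r ^ (n+1))⁻¹
          ≤ r * r ^ (n+1) * (1 - r)⁻¹ := by
            apply mul_le_mul (mul_le_mul_of_nonneg_right hle (by positivity)) hinv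
              (by positivity) (by positivity)
        _ = r / (2 * (1-r)) * r ^ (n+1) * 2 := by field_simp
    nlinarith [h1]

noncomputable def jP (Q : ℂ) : ℂ := ∏' n : ℕ, (1 - Q ^ (n + 1))

lemma jP_eq_exp (hQ : ‖Q‖ < 1) :
    jP Q = Complex.exp (∑' n : ℕ, Complex.log (1 - Q ^ (n + 1))) := by
  have h := Complex.cexp_tsum_eq_tprod (ι := ℕ)
    (f := fun n => 1 - Q ^ (n + 1)) (fun n => one_sub_pow_ne hQ n)
    (jlog_summable hQ)
  exact h.symm

lemma jP_ne_zero (hQ : ‖Q‖ < 1) : jP Q ≠ 0 := by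
  rw [jP_eq_exp hQ]; exact Complex.exp_ne_zero _

lemma jP_multipliable (hQ : ‖Q‖ < 1) : Multipliable (fun n : ℕ => 1 - Q ^ (n + 1)) :=
  Complex.multipliable_of_summable_log (ι := ℕ)
    (f := fun n => 1 - Q ^ (n + 1)) (jlog_summable hQ)

lemma jhp_tendsto (hQ : ‖Q‖ < 1) :
    Tendsto (fun m : ℕ => jhp Q m) atTop (nhds (jP Q)) := by
  have := (jP_multipliable hQ).hasProd.tendsto_prod_nat
  exact this

lemma jG_norm_le (hQ : ‖Q‖ < 1) (m : ℤ) :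
    ‖jG Q m‖ ≤ Real.exp (‖Q‖ / (1 - ‖Q‖) ^ 2) := by
  rw [jG]
  split_ifs with h
  · rw [norm_inv]
    have h1 := jhp_norm_ge hQ m.toNat
    have h2 : (0:ℝ) < Real.exp (-(‖Q‖ / (1 - ‖Q‖) ^ 2)) := Real.exp_pos _
    calc ‖jhp Q m.toNat‖⁻¹ ≤ (Real.exp (-(‖Q‖ / (1 - ‖Q‖) ^ 2)))⁻¹ :=
          inv_anti₀ h2 h1
      _ = Real.exp (‖Q‖ / (1 - ‖Q‖) ^ 2) := by rw [Real.exp_neg, inv_inv]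
  · simp [Real.exp_pos, le_of_lt, (Real.exp_pos _).le]

lemma jB_norm_le (hQ : ‖Q‖ < 1) (N : ℕ) (k : ℤ) :
    ‖jB Q N k‖ ≤ Real.exp (‖Q‖ / (1 - ‖Q‖)) * Real.exp (‖Q‖ / (1 - ‖Q‖) ^ 2)
      * Real.exp (‖Q‖ / (1 - ‖Q‖) ^ 2) := by
  rw [jB, norm_mul, norm_mul]
  have e1 := jhp_norm_le hQ (2 * N)
  have e2 := jG_norm_le hQ ((N : ℤ) + k)
  have e3 := jG_norm_le hQ ((N : ℤ) - k)
  apply mul_le_mul (mul_le_mul e1 e2 (norm_nonneg _) (Real.exp_pos _).le) e3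
    (norm_nonneg _)
  positivity

end limits2
section limits3
open Filter Topology

variable {Q : ℂ}

lemma jB_tendsto (hQ : ‖Q‖ < 1) (k : ℤ) :
    Tendsto (fun N : ℕ => jB Q N k) atTop (nhds (jP Q)⁻¹) := by
  have hP := jP_ne_zero hQ
  have T0 : Tendsto (fun N : ℕ => 2 * N) atTop atTop :=
    tendsto_atTop_atTop.2 fun b => ⟨b, fun a ha => by omega⟩
  have T1 : Tendsto (fun N : ℕ => jhp Q (2 * N)) atTop (nhds (jP Q)) :=
    (jhp_tendsto hQ).comp T0
  have T2 : Tendsto (fun N : ℕ => ((N : ℤ) + k).toNat) atTop atTop := by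
    apply tendsto_atTop_atTop.2
    intro b
    exact ⟨b + k.natAbs, fun a ha => by omega⟩
  have T3 : Tendsto (fun N : ℕ => ((N : ℤ) - k).toNat) atTop atTop := by
    apply tendsto_atTop_atTop.2
    intro b
    exact ⟨b + k.natAbs, fun a ha => by omega⟩
  have T4 : Tendsto (fun N : ℕ => jhp Q (2 * N) * (jhp Q ((N : ℤ) + k).toNat)⁻¹
      * (jhp Q ((N : ℤ) - k).toNat)⁻¹) atTop
      (nhds (jP Q * (jP Q)⁻¹ * (jP Q)⁻¹)) :=
    (T1.mul (((jhp_tendsto hQ).comp T2).inv₀ hP)).mul (((jhp_tendsto hQ).comp T3).inv₀ hP)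
  have hval : jP Q * (jP Q)⁻¹ * (jP Q)⁻¹ = (jP Q)⁻¹ := by
    field_simp
  rw [hval] at T4
  apply T4.congr'
  filter_upwards [eventually_ge_atTop k.natAbs] with N hN
  rw [jB, jG, jG, if_pos (by omega), if_pos (by omega)]

lemma jbound_summable {r : ℝ} (h0 : 0 ≤ r) (h1 : r < 1) {C : ℝ} (hC : 0 ≤ C) :
    Summable (fun k : ℤ => C * k.natAbs * r ^ (jT k).toNat) := by
  have hnat : ∀ n : ℕ, (jT (n : ℤ)).toNat ≥ n := by
    intro n
    have h := jT_two_mul (n : ℤ)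
    have hnn : (n : ℤ) * ((n : ℤ) + 1) ≥ 2 * n := by
      have : (n : ℤ) ≤ (n : ℤ) ^ 2 := by exact_mod_cast Nat.le_self_pow (by norm_num) n
      nlinarith
    have h5 : 2 * jT (n : ℤ) ≥ 2 * n := h ▸ hnn
    omega
  have hneg : ∀ n : ℕ, (jT (-((n : ℤ) + 1))).toNat ≥ n := by
    intro n
    rw [jT_neg]
    exact hnat n
  have hmaj : Summable (fun n : ℕ => C * ((n : ℝ) + 1) * r ^ n) := by
    have hs : Summable (fun n : ℕ => ((n : ℝ) + 1) * r ^ n) := by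
      have h1' : Summable (fun n : ℕ => (n : ℝ) * r ^ n) := by
        have := summable_pow_mul_geometric_of_norm_lt_one (R := ℝ) 1
          (by rwa [Real.norm_eq_abs, _root_.abs_of_nonneg h0])
        simpa using this
      have h2' : Summable (fun n : ℕ => r ^ n) := summable_geometric_of_lt_one h0 h1
      exact Summable.congr (h1'.add h2') (fun n => by ring)
    exact (hs.mul_left C).congr (fun n => by ring)
  have hnonneg1 : ∀ n : ℕ, (0:ℝ) ≤ C * ((n : ℤ) : ℤ).natAbs * r ^ (jT (n : ℤ)).toNat :=
    fun n => mul_nonneg (mul_nonneg hC (by positivity)) (by positivity)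
  apply Summable.of_nat_of_neg_add_one
  · refine Summable.of_nonneg_of_le (fun n => hnonneg1 n) (fun n => ?_) hmaj
    simp only [Int.natAbs_natCast]
    have hr : r ^ (jT (n : ℤ)).toNat ≤ r ^ n := pow_le_pow_of_le_one h0 h1.le (hnat n)
    have h4 : (n : ℝ) ≤ (n : ℝ) + 1 := by linarith
    exact mul_le_mul (mul_le_mul_of_nonneg_left h4 hC) hr (by positivity)
      (mul_nonneg hC (by linarith [Nat.cast_nonneg (α := ℝ) n]))
  · refine Summable.of_nonneg_of_le
      (fun n => mul_nonneg (mul_nonneg hC (by positivity)) (by positivity)) (fun n => ?_) hmaj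
    have hab : ((-((n : ℤ) + 1)).natAbs : ℝ) = (n : ℝ) + 1 := by
      have : (-((n : ℤ) + 1)).natAbs = n + 1 := by omega
      rw [this]; push_cast; ring
    rw [hab]
    have hr : r ^ (jT (-((n : ℤ) + 1))).toNat ≤ r ^ n := pow_le_pow_of_le_one h0 h1.le (hneg n)
    exact mul_le_mul_of_nonneg_left hr (mul_nonneg hC (by positivity))

lemma jnorm_term (hQ0 : Q ≠ 0) (k : ℤ) :
    ‖Q ^ jT k‖ = ‖Q‖ ^ (jT k).toNat := by
  rw [norm_zpow, ← Int.toNat_of_nonneg (jT_nonneg k), zpow_natCast]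
  rw [Int.toNat_of_nonneg (jT_nonneg k)]

lemma jS_eq (hQ0 : Q ≠ 0) (hQ : ‖Q‖ < 1) :
    ∑' k : ℤ, (-1 : ℂ) ^ k * (k : ℂ) * Q ^ jT k = jP Q ^ 3 := by
  set P := jP Q with hP
  have hPne := jP_ne_zero hQ
  set CB : ℝ := Real.exp (‖Q‖ / (1 - ‖Q‖)) * Real.exp (‖Q‖ / (1 - ‖Q‖) ^ 2)
      * Real.exp (‖Q‖ / (1 - ‖Q‖) ^ 2) with hCB
  have hnorm : ∀ (N : ℕ) (k : ℤ), ‖(-1 : ℂ) ^ k * (k : ℂ) * jB Q (N + 1) k * Q ^ jT k‖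
      ≤ CB * k.natAbs * ‖Q‖ ^ (jT k).toNat := by
    intro N k
    rw [norm_mul, norm_mul, norm_mul, jnorm_term hQ0]
    have h1 : ‖(-1 : ℂ) ^ k‖ = 1 := by
      rw [norm_zpow, norm_neg, norm_one, one_zpow]
    have h2 : ‖(k : ℂ)‖ = (k.natAbs : ℝ) := by
      rw [show ((k : ℂ)) = ((k : ℝ) : ℂ) by push_cast; rfl, Complex.norm_real,
        Real.norm_eq_abs, Nat.cast_natAbs]
      push_cast
      rfl
    rw [h1, h2, one_mul]
    apply mul_le_mul_of_nonneg_right _ (by positivity)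
    rw [mul_comm CB _]
    exact mul_le_mul_of_nonneg_left (jB_norm_le hQ (N + 1) k) (by positivity)
  have hdom := tendsto_tsum_of_dominated_convergence
    (f := fun (N : ℕ) (k : ℤ) => (-1 : ℂ) ^ k * (k : ℂ) * jB Q (N + 1) k * Q ^ jT k)
    (g := fun k : ℤ => (-1 : ℂ) ^ k * (k : ℂ) * P⁻¹ * Q ^ jT k)
    (bound := fun k : ℤ => CB * k.natAbs * ‖Q‖ ^ (jT k).toNat)
    (jbound_summable (norm_nonneg Q) hQ (by positivity : (0:ℝ) ≤ CB))
    (fun k => by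
      have hB := (jB_tendsto hQ k).comp (tendsto_add_atTop_nat 1)
      have := (hB.const_mul ((-1 : ℂ) ^ k * (k : ℂ))).mul_const (Q ^ jT k)
      refine this.congr fun N => ?_
      simp only [Function.comp_apply]
      try ring)
    (Filter.Eventually.of_forall (fun N k => hnorm N k))
  have heq : (fun N : ℕ => ∑' k : ℤ, (-1 : ℂ) ^ k * (k : ℂ) * jB Q (N + 1) k * Q ^ jT k)
      = fun N : ℕ => jhp Q (N + 1) * jhp Q N := funext fun N => jFINDERIV hQ0 hQ N
  rw [heq] at hdom
  have hdom2 : Tendsto (fun N : ℕ => jhp Q (N + 1) * jhp Q N) atTop (nhds (P * P)) :=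
    ((jhp_tendsto hQ).comp (tendsto_add_atTop_nat 1)).mul (jhp_tendsto hQ)
  have hkey : ∑' k : ℤ, (-1 : ℂ) ^ k * (k : ℂ) * P⁻¹ * Q ^ jT k = P * P :=
    tendsto_nhds_unique hdom hdom2
  have hre : ∑' k : ℤ, (-1 : ℂ) ^ k * (k : ℂ) * P⁻¹ * Q ^ jT k
      = P⁻¹ * ∑' k : ℤ, (-1 : ℂ) ^ k * (k : ℂ) * Q ^ jT k := by
    rw [← tsum_mul_left]
    apply tsum_congr; intro k; ring
  rw [hre] at hkey
  have h := congrArg (fun x => P * x) hkey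
  try simp only at h
  rw [← mul_assoc, mul_inv_cancel₀ hPne, one_mul] at h
  rw [h]; ring

lemma jacobi_cube (hQ0 : Q ≠ 0) (hQ : ‖Q‖ < 1) :
    ∑' n : ℕ, (-1 : ℂ) ^ n * (2 * (n : ℂ) + 1) * Q ^ jT (n : ℤ) = jP Q ^ 3 := by
  have hsummable : Summable (fun k : ℤ => (-1 : ℂ) ^ k * (k : ℂ) * Q ^ jT k) := by
    apply Summable.of_norm_bounded (g := fun k : ℤ => (1 : ℝ) * k.natAbs * ‖Q‖ ^ (jT k).toNat)
      (jbound_summable (norm_nonneg Q) hQ (by norm_num : (0:ℝ) ≤ 1))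
    intro k
    rw [norm_mul, norm_mul, jnorm_term hQ0]
    have h1 : ‖(-1 : ℂ) ^ k‖ = 1 := by rw [norm_zpow, norm_neg, norm_one, one_zpow]
    have h2 : ‖(k : ℂ)‖ = (k.natAbs : ℝ) := by
      rw [show ((k : ℂ)) = ((k : ℝ) : ℂ) by push_cast; rfl, Complex.norm_real,
        Real.norm_eq_abs, Nat.cast_natAbs]
      push_cast
      rfl
    rw [h1, h2]
  have hpair := tsum_nat_add_neg_add_one hsummable
  rw [jS_eq hQ0 hQ] at hpair
  rw [← hpair]
  apply tsum_congr
  intro n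
  have e1 : ((-1 : ℂ)) ^ ((n : ℤ)) = (-1 : ℂ) ^ n := zpow_natCast _ _
  have e2 : ((-1 : ℂ)) ^ (-((n : ℤ) + 1)) = (-1 : ℂ) ^ n * (-1) := by
    rw [zpow_neg, show ((n : ℤ) + 1) = ((n + 1 : ℕ) : ℤ) by push_cast; ring, zpow_natCast,
      pow_succ, mul_inv, ← inv_pow, inv_neg, inv_one]
  have e3 : jT (-((n : ℤ) + 1)) = jT (n : ℤ) := jT_neg _
  rw [e1, e2, e3]
  push_cast
  ring

end limits3
section theta
open Filter Topology

noncomputable def thetaJ' (τ z : ℂ) : ℂ :=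
  ∑' n : ℤ, (-1 : ℂ) ^ n *
    Complex.exp (Real.pi * Complex.I * ((2 * n + 1) ^ 2 * τ / 4 + (2 * n + 1) * z))

lemma neg_one_zpow_eq_exp (n : ℤ) : (-1 : ℂ) ^ n = Complex.exp ((n : ℂ) * (Real.pi * Complex.I)) := by
  rw [Complex.exp_int_mul, Complex.exp_pi_mul_I]

lemma thetaJ_eq_theta2 (τ : ℂ) : thetaJ' τ = fun z =>
    Complex.exp (Real.pi * Complex.I * τ / 4 + Real.pi * Complex.I * z) *
      jacobiTheta₂ (z + τ / 2 + 1 / 2) τ := by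
  funext z
  rw [thetaJ', jacobiTheta₂, ← tsum_mul_left]
  apply tsum_congr
  intro n
  rw [jacobiTheta₂_term, neg_one_zpow_eq_exp, ← Complex.exp_add, ← Complex.exp_add]
  congr 1
  push_cast
  ring

lemma thetaJ_hasDerivAt {τ : ℂ} (hτ : 0 < τ.im) :
    HasDerivAt (thetaJ' τ)
      (Real.pi * Complex.I * Complex.exp (Real.pi * Complex.I * τ / 4)
          * jacobiTheta₂ (τ / 2 + 1 / 2) τ
        + Complex.exp (Real.pi * Complex.I * τ / 4)
          * jacobiTheta₂' (τ / 2 + 1 / 2) τ) 0 := by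
  rw [thetaJ_eq_theta2 τ]
  have h1 : HasDerivAt (fun z : ℂ => Real.pi * Complex.I * τ / 4 + Real.pi * Complex.I * z)
      (Real.pi * Complex.I) 0 := by
    simpa using ((hasDerivAt_id (0 : ℂ)).const_mul (Real.pi * Complex.I)).const_add
      (Real.pi * Complex.I * τ / 4)
  have h2 : HasDerivAt (fun z : ℂ => jacobiTheta₂ (z + (τ / 2 + 1 / 2)) τ)
      (jacobiTheta₂' (τ / 2 + 1 / 2) τ) 0 := by
    have hmain := hasDerivAt_jacobiTheta₂_fst (τ / 2 + 1 / 2) hτ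
    have harg : HasDerivAt (fun z : ℂ => z + (τ / 2 + 1 / 2)) 1 0 :=
      (hasDerivAt_id (0 : ℂ)).add_const (τ / 2 + 1 / 2)
    have hmain' : HasDerivAt (fun x => jacobiTheta₂ x τ) (jacobiTheta₂' (τ / 2 + 1 / 2) τ)
        ((fun z : ℂ => z + (τ / 2 + 1 / 2)) 0) := by simpa using hmain
    simpa [Function.comp_def] using hmain'.comp (0 : ℂ) harg
  have h2' : HasDerivAt (fun z : ℂ => jacobiTheta₂ (z + τ / 2 + 1 / 2) τ)
      (jacobiTheta₂' (τ / 2 + 1 / 2) τ) 0 := by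
    apply h2.congr_of_eventuallyEq
    filter_upwards with z
    rw [add_assoc]
  have := (h1.cexp).mul h2'
  simp only [zero_add, mul_zero, add_zero] at this ⊢
  convert this using 1
  all_goals first | rfl | ring
end theta
section final
open Filter Topology

lemma theta2_combined {τ : ℂ} (hτ : 0 < τ.im) :
    Real.pi * Complex.I * jacobiTheta₂ (τ / 2 + 1 / 2) τ + jacobiTheta₂' (τ / 2 + 1 / 2) τ
      = 2 * Real.pi * Complex.I * jP (Complex.exp (2 * Real.pi * Complex.I * τ)) ^ 3 := by
  set w : ℂ := τ / 2 + 1 / 2 with hw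
  set Q : ℂ := Complex.exp (2 * Real.pi * Complex.I * τ) with hQdef
  have hQ0 : Q ≠ 0 := Complex.exp_ne_zero _
  have hQ : ‖Q‖ < 1 := by
    rw [hQdef, Complex.norm_exp]
    rw [Real.exp_lt_one_iff]
    have : (2 * (Real.pi : ℂ) * Complex.I * τ).re = -(2 * Real.pi * τ.im) := by
      simp [Complex.mul_re, Complex.mul_im]
    rw [this]
    have := Real.pi_pos
    nlinarith
  have hterm : ∀ n : ℤ, jacobiTheta₂_term n w τ = (-1 : ℂ) ^ n * Q ^ jT n := by
    intro n
    have hcast : ((jT n : ℤ) : ℂ) * 2 = (n : ℂ) ^ 2 + n := by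
      have h2 : ((2 * jT n : ℤ) : ℂ) = ((n * (n + 1) : ℤ) : ℂ) :=
        congrArg _ (congrArg Int.cast (jT_two_mul n))
      push_cast at h2
      linear_combination h2
    rw [jacobiTheta₂_term, neg_one_zpow_eq_exp, hQdef, ← Complex.exp_int_mul, ← Complex.exp_add]
    congr 1
    rw [hw]
    push_cast
    linear_combination (-((Real.pi : ℂ) * Complex.I * τ)) * hcast
  have hs1 := hasSum_jacobiTheta₂_term w hτ
  have hs2 := hasSum_jacobiTheta₂'_term w hτ
  have hcomb := (hs1.mul_left (Real.pi * Complex.I)).add hs2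
  have hfe : (fun n : ℤ => Real.pi * Complex.I * jacobiTheta₂_term n w τ
      + jacobiTheta₂'_term n w τ)
      = fun n : ℤ => Real.pi * Complex.I * (2 * (n : ℂ) + 1) * ((-1 : ℂ) ^ n * Q ^ jT n) := by
    funext n
    rw [jacobiTheta₂'_term, hterm n]
    push_cast
    ring
  rw [hfe] at hcomb
  rw [← hcomb.tsum_eq]
  have hsummable := hcomb.summable
  have hpair := tsum_nat_add_neg_add_one hsummable
  rw [← hpair]
  have hper : ∀ n : ℕ,
      Real.pi * Complex.I * (2 * ((n : ℤ) : ℂ) + 1) * ((-1 : ℂ) ^ (n : ℤ) * Q ^ jT (n : ℤ))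
      + Real.pi * Complex.I * (2 * (Int.cast (-((n : ℤ) + 1)) : ℂ) + 1)
          * ((-1 : ℂ) ^ (-((n : ℤ) + 1)) * Q ^ jT (-((n : ℤ) + 1)))
      = 2 * Real.pi * Complex.I * ((-1 : ℂ) ^ n * (2 * (n : ℂ) + 1) * Q ^ jT (n : ℤ)) := by
    intro n
    have e1 : ((-1 : ℂ)) ^ ((n : ℤ)) = (-1 : ℂ) ^ n := zpow_natCast _ _
    have e2 : ((-1 : ℂ)) ^ (-((n : ℤ) + 1)) = (-1 : ℂ) ^ n * (-1) := by
      rw [zpow_neg, show ((n : ℤ) + 1) = ((n + 1 : ℕ) : ℤ) by push_cast; ring, zpow_natCast,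
        pow_succ, mul_inv, ← inv_pow, inv_neg, inv_one]
    have e3 : jT (-((n : ℤ) + 1)) = jT (n : ℤ) := jT_neg _
    rw [e1, e2, e3]
    push_cast
    ring
  calc ∑' n : ℕ, (Real.pi * Complex.I * (2 * ((n : ℤ) : ℂ) + 1)
          * ((-1 : ℂ) ^ (n : ℤ) * Q ^ jT (n : ℤ))
        + Real.pi * Complex.I * (2 * (Int.cast (-((n : ℤ) + 1)) : ℂ) + 1)
          * ((-1 : ℂ) ^ (-((n : ℤ) + 1)) * Q ^ jT (-((n : ℤ) + 1))))
      = ∑' n : ℕ, 2 * Real.pi * Complex.I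
          * ((-1 : ℂ) ^ n * (2 * (n : ℂ) + 1) * Q ^ jT (n : ℤ)) := tsum_congr hper
    _ = 2 * Real.pi * Complex.I
          * ∑' n : ℕ, (-1 : ℂ) ^ n * (2 * (n : ℂ) + 1) * Q ^ jT (n : ℤ) := tsum_mul_left
    _ = 2 * Real.pi * Complex.I * jP Q ^ 3 := by rw [jacobi_cube hQ0 hQ]

end final

/-- `(2πi)^{−1} ∂ϑ/∂z(τ,0) = η(τ)³`:
`∂ϑ/∂z(τ,0) = 2πi · exp(πiτ/4) · ∏_{n≥1}(1 − exp(2πinτ))³`. -/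
theorem statement12 (τ : ℂ) (hτ : 0 < τ.im) :
    deriv (thetaJ τ) 0 =
      2 * Real.pi * Complex.I * Complex.exp (Real.pi * Complex.I * τ / 4) *
        (∏' n : ℕ, (1 - Complex.exp (2 * Real.pi * Complex.I * τ) ^ (n + 1))) ^ 3 := by
  have hth : thetaJ τ = thetaJ' τ := rfl
  rw [hth, (thetaJ_hasDerivAt hτ).deriv]
  have hcomb := theta2_combined hτ
  have hprod : (∏' n : ℕ, (1 - Complex.exp (2 * Real.pi * Complex.I * τ) ^ (n + 1)))
      = jP (Complex.exp (2 * Real.pi * Complex.I * τ)) := rfl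
  rw [hprod]
  calc Real.pi * Complex.I * Complex.exp (Real.pi * Complex.I * τ / 4)
          * jacobiTheta₂ (τ / 2 + 1 / 2) τ
        + Complex.exp (Real.pi * Complex.I * τ / 4) * jacobiTheta₂' (τ / 2 + 1 / 2) τ
      = Complex.exp (Real.pi * Complex.I * τ / 4)
          * (Real.pi * Complex.I * jacobiTheta₂ (τ / 2 + 1 / 2) τ
            + jacobiTheta₂' (τ / 2 + 1 / 2) τ) := by ring
    _ = Complex.exp (Real.pi * Complex.I * τ / 4)
          * (2 * Real.pi * Complex.I * jP (Complex.exp (2 * Real.pi * Complex.I * τ)) ^ 3) := by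
        rw [hcomb]
    _ = 2 * Real.pi * Complex.I * Complex.exp (Real.pi * Complex.I * τ / 4)
          * jP (Complex.exp (2 * Real.pi * Complex.I * τ)) ^ 3 := by ring
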